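/- Let (A,≻,≺) be a finite-dimensional dendriform algebra over a field F with associated associative product x*y = x≻y + x≺y, and let r ∈ A⊗A be symmetric. Then r satisfies the D-equation r₁₂*r₁₃ = r₁₃≺r₂₃ + r₂₃≻r₁₂ if and only if the induced linear map r : A* → A satisfies r(a*)*r(b*) = r(R≺*(r(a*))b* + L≻*(r(b*))a*) for all a*, b* ∈ A*, where ⟨R≺*(x)a*, y⟩ = ⟨a*, y≺x⟩ and ⟨L≻*(x)a*, y⟩ = ⟨a*, x≻y⟩. -/

import Mathlib

open TensorProduct LinearMap

section Prelude
variable {F : Type*} [Field F]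

/-- Associativity of a (nonunital) bilinear product. -/
def IsAssocMul {A : Type*} [AddCommGroup A] [Module F A]
    (m : A →ₗ[F] A →ₗ[F] A) : Prop :=
  ∀ x y z, m (m x y) z = m x (m y z)

/-- `(l, r, V)` is a bimodule of the associative algebra `(A, m)`. -/
def IsBimodule {A V : Type*} [AddCommGroup A] [Module F A]
    [AddCommGroup V] [Module F V]
    (m : A →ₗ[F] A →ₗ[F] A) (l r : A →ₗ[F] V →ₗ[F] V) : Prop :=
  (∀ x y v, l (m x y) v = l x (l y v)) ∧
  (∀ x y v, r (m x y) v = r y (r x v)) ∧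
  (∀ x y v, l x (r y v) = r y (l x v))

/-- `(A, B, lA, rA, lB, rB)` is a matched pair of associative algebras. -/
def IsMatchedPair {A B : Type*} [AddCommGroup A] [Module F A]
    [AddCommGroup B] [Module F B]
    (mA : A →ₗ[F] A →ₗ[F] A) (mB : B →ₗ[F] B →ₗ[F] B)
    (lA rA : A →ₗ[F] B →ₗ[F] B) (lB rB : B →ₗ[F] A →ₗ[F] A) : Prop :=
  IsAssocMul mA ∧ IsAssocMul mB ∧ IsBimodule mA lA rA ∧ IsBimodule mB lB rB ∧
  (∀ x a b, lA x (mB a b) = lA (rB a x) b + mB (lA x a) b) ∧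
  (∀ x a b, rA x (mB a b) = rA (lB b x) a + mB a (rA x b)) ∧
  (∀ a x y, lB a (mA x y) = lB (rA x a) y + mA (lB a x) y) ∧
  (∀ a x y, rB a (mA x y) = rB (lA y a) x + mA x (rB a y)) ∧
  (∀ x a b, lA (lB a x) b + mB (rA x a) b - rA (rB b x) a - mB a (lA x b) = 0) ∧
  (∀ a x y, lB (lA x a) y + mA (rB a x) y - rB (rA y a) x - mA x (lB a y) = 0)

/-- Dendriform algebra axioms for a pair of bilinear products `≻ = s`, `≺ = p`. -/
def IsDendriform {A : Type*} [AddCommGroup A] [Module F A]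
    (s p : A →ₗ[F] A →ₗ[F] A) : Prop :=
  (∀ x y z, p (p x y) z = p x (s y z + p y z)) ∧
  (∀ x y z, p (s x y) z = s x (p y z)) ∧
  (∀ x y z, s x (s y z) = s (s x y + p x y) z)

/-- The pairing of `f ⊗ g ∈ A* ⊗ A*` with elements of `A ⊗ A`. -/
noncomputable def pair2 {A : Type*} [AddCommGroup A] [Module F A]
    (f g : Module.Dual F A) : (A ⊗[F] A) →ₗ[F] F :=
  (TensorProduct.lid F F).toLinearMap ∘ₗ TensorProduct.map f g

/-- `t12 m (r ⊗ s)` is `r₁₂ ∙ s₁₃`: on `(x ⊗ y) ⊗ (x' ⊗ y')` it gives `m x x' ⊗ y ⊗ y'`. -/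
noncomputable def t12 {A : Type*} [AddCommGroup A] [Module F A]
    (m : A →ₗ[F] A →ₗ[F] A) :
    ((A ⊗[F] A) ⊗[F] (A ⊗[F] A)) →ₗ[F] A ⊗[F] (A ⊗[F] A) :=
  TensorProduct.map (TensorProduct.lift m) LinearMap.id ∘ₗ
    (TensorProduct.tensorTensorTensorComm F A A A A).toLinearMap

/-- `t13 m (r ⊗ s)` is `r₁₃ ∙ s₂₃`: on `(x ⊗ y) ⊗ (x' ⊗ y')` it gives `x ⊗ x' ⊗ m y y'`. -/
noncomputable def t13 {A : Type*} [AddCommGroup A] [Module F A]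
    (m : A →ₗ[F] A →ₗ[F] A) :
    ((A ⊗[F] A) ⊗[F] (A ⊗[F] A)) →ₗ[F] A ⊗[F] (A ⊗[F] A) :=
  (TensorProduct.assoc F A A A).toLinearMap ∘ₗ
    TensorProduct.map LinearMap.id (TensorProduct.lift m) ∘ₗ
    (TensorProduct.tensorTensorTensorComm F A A A A).toLinearMap

/-- `t23 m (r ⊗ s)` is `r₂₃ ∙ s₁₂`: on `(x ⊗ y) ⊗ (x' ⊗ y')` it gives `x' ⊗ m x y' ⊗ y`. -/
noncomputable def t23 {A : Type*} [AddCommGroup A] [Module F A]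
    (m : A →ₗ[F] A →ₗ[F] A) :
    ((A ⊗[F] A) ⊗[F] (A ⊗[F] A)) →ₗ[F] A ⊗[F] (A ⊗[F] A) :=
  (TensorProduct.leftComm F A A A).toLinearMap ∘ₗ
    TensorProduct.map LinearMap.id (TensorProduct.comm F A A).toLinearMap ∘ₗ
    TensorProduct.map (TensorProduct.lift m) LinearMap.id ∘ₗ
    (TensorProduct.tensorTensorTensorComm F A A A A).toLinearMap ∘ₗ
    TensorProduct.map LinearMap.id (TensorProduct.comm F A A).toLinearMap

/-- `aybE m r = r₁₂r₁₃ + r₁₃r₂₃ − r₂₃r₁₂`, the associative Yang–Baxter expression. -/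
noncomputable def aybE {A : Type*} [AddCommGroup A] [Module F A]
    (m : A →ₗ[F] A →ₗ[F] A) (r : A ⊗[F] A) : A ⊗[F] (A ⊗[F] A) :=
  t12 m (r ⊗ₜ r) + t13 m (r ⊗ₜ r) - t23 m (r ⊗ₜ r)

end Prelude

section Aux
variable {F : Type*} [Field F] {A : Type*} [AddCommGroup A] [Module F A]

noncomputable def pair3 (u v w : Module.Dual F A) : (A ⊗[F] (A ⊗[F] A)) →ₗ[F] F :=
  (TensorProduct.lid F F).toLinearMap ∘ₗ TensorProduct.map u (pair2 v w)

@[simp] lemma pair2_tmul (u v : Module.Dual F A) (x y : A) :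
    pair2 u v (x ⊗ₜ[F] y) = u x * v y := by
  simp [pair2, smul_eq_mul]

@[simp] lemma pair3_tmul (u v w : Module.Dual F A) (x y z : A) :
    pair3 u v w (x ⊗ₜ[F] (y ⊗ₜ[F] z)) = u x * (v y * w z) := by
  simp [pair3, smul_eq_mul]

@[simp] lemma t12_tmul (m : A →ₗ[F] A →ₗ[F] A) (x y x' y' : A) :
    t12 m ((x ⊗ₜ[F] y) ⊗ₜ[F] (x' ⊗ₜ[F] y')) = m x x' ⊗ₜ[F] (y ⊗ₜ[F] y') := by
  simp [t12]

@[simp] lemma t13_tmul (m : A →ₗ[F] A →ₗ[F] A) (x y x' y' : A) :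
    t13 m ((x ⊗ₜ[F] y) ⊗ₜ[F] (x' ⊗ₜ[F] y')) = x ⊗ₜ[F] (x' ⊗ₜ[F] m y y') := by
  simp [t13]

@[simp] lemma t23_tmul (m : A →ₗ[F] A →ₗ[F] A) (x y x' y' : A) :
    t23 m ((x ⊗ₜ[F] y) ⊗ₜ[F] (x' ⊗ₜ[F] y')) = x' ⊗ₜ[F] (m x y' ⊗ₜ[F] y) := by
  simp [t23, TensorProduct.leftComm_tmul]

lemma triple_sep [FiniteDimensional F A] (t : A ⊗[F] (A ⊗[F] A))
    (h : ∀ u v w : Module.Dual F A, pair3 u v w t = 0) : t = 0 := by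
  set B := Module.finBasis F A with hB
  set BB := B.tensorProduct (B.tensorProduct B) with hBB
  have key : ∀ (i j k : Fin (Module.finrank F A)) (t : A ⊗[F] (A ⊗[F] A)),
      BB.repr t (i, (j, k)) = pair3 (B.coord i) (B.coord j) (B.coord k) t := by
    intro i j k t
    induction t using TensorProduct.induction_on with
    | zero => simp
    | tmul x yz =>
      induction yz using TensorProduct.induction_on with
      | zero => simp
      | tmul y z =>
        simp only [hBB, Module.Basis.tensorProduct_repr_tmul_apply, Module.Basis.coord_apply,
          smul_eq_mul, pair3_tmul]
        ring
      | add a b ha hb => simp [TensorProduct.tmul_add, ha, hb]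
    | add a b ha hb => simp [ha, hb]
  have h0 : BB.repr t = 0 := by
    ext ijk
    obtain ⟨i, j, k⟩ := ijk
    simp only [Finsupp.coe_zero, Pi.zero_apply]
    rw [key]
    exact h _ _ _
  exact (LinearEquiv.map_eq_zero_iff BB.repr).mp h0

end Aux


/-- a symmetric `r` satisfies the `D`-equation iff
`r(a*)*r(b*) = r(R≺*(r(a*))b* + L≻*(r(b*))a*)` for all `a*, b*`. -/
theorem D_equation_iff_operator_form
    {F A : Type*} [Field F] [AddCommGroup A] [Module F A] [FiniteDimensional F A]
    (s p : A →ₗ[F] A →ₗ[F] A) (hd : IsDendriform s p)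
    (r : A ⊗[F] A)
    (hsymm : (TensorProduct.comm F A A) r = r)
    (rmap : Module.Dual F A →ₗ[F] A)
    (hrmap : ∀ u v : Module.Dual F A, u (rmap v) = pair2 u v r)
    -- the dual operators `R≺*` and `L≻*`
    (Rp Ls : A →ₗ[F] Module.Dual F A →ₗ[F] Module.Dual F A)
    (hRp : ∀ (x y : A) (a : Module.Dual F A), Rp x a y = a (p y x))
    (hLs : ∀ (x y : A) (a : Module.Dual F A), Ls x a y = a (s x y)) :
    (t12 (s + p) (r ⊗ₜ r) = t13 p (r ⊗ₜ r) + t23 s (r ⊗ₜ r)) ↔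
      (∀ a b : Module.Dual F A,
        (s + p) (rmap a) (rmap b) = rmap (Rp (rmap a) b + Ls (rmap b) a)) := by
    classical
  obtain ⟨S, hS⟩ := TensorProduct.exists_finset r
  -- duality separation on A
  have dsep : ∀ x y : A, (∀ u : Module.Dual F A, u x = u y) → x = y := by
    intro x y h
    have := (Module.forall_dual_apply_eq_zero_iff F (x - y)).mp
      (fun φ => by rw [map_sub, h φ, sub_self])
    exact sub_eq_zero.mp this
  -- explicit form of rmap
  have hr : ∀ v : Module.Dual F A, rmap v = ∑ q ∈ S, v q.2 • q.1 := by
    intro v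
    refine dsep _ _ fun u => ?_
    rw [hrmap, hS]
    simp only [map_sum, map_smul, pair2_tmul, smul_eq_mul]
    exact (Finset.sum_congr rfl fun q _ => mul_comm _ _).symm
  -- consequence of symmetry
  have hsym2 : ∀ f g : Module.Dual F A,
      (∑ q ∈ S, f q.1 * g q.2) = ∑ q ∈ S, f q.2 * g q.1 := by
    intro f g
    have h1 := congrArg (pair2 f g) hsymm
    rw [hS] at h1
    simp only [map_sum, TensorProduct.comm_tmul, pair2_tmul] at h1
    exact h1.symm
  -- the three pairing computations
  have e12 : ∀ (m : A →ₗ[F] A →ₗ[F] A) (u v w : Module.Dual F A),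
      pair3 u v w (t12 m (r ⊗ₜ r)) = u (m (rmap v) (rmap w)) := by
    intro m u v w
    rw [hr v, hr w]
    conv_lhs => rw [hS]
    rw [TensorProduct.sum_tmul]
    simp only [TensorProduct.tmul_sum, map_sum, t12_tmul, pair3_tmul, map_smul,
      LinearMap.sum_apply, LinearMap.smul_apply, smul_eq_mul, Finset.mul_sum, Finset.sum_mul]
    conv_rhs => rw [Finset.sum_comm]
    refine Finset.sum_congr rfl fun a _ => Finset.sum_congr rfl fun b _ => by ring
  have e13 : ∀ u v w : Module.Dual F A,
      pair3 u v w (t13 p (r ⊗ₜ r)) = u (rmap (Rp (rmap v) w)) := by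
    intro u v w
    have hL : pair3 u v w (t13 p (r ⊗ₜ r))
        = ∑ a ∈ S, ∑ b ∈ S, u a.1 * (v b.1 * w (p a.2 b.2)) := by
      conv_lhs => rw [hS]
      rw [TensorProduct.sum_tmul]
      simp only [TensorProduct.tmul_sum, map_sum, t13_tmul, pair3_tmul]
    rw [hL, hr (Rp (rmap v) w)]
    simp only [map_sum, map_smul, smul_eq_mul]
    refine Finset.sum_congr rfl fun a _ => ?_
    rw [hRp, hr v]
    simp only [map_sum, map_smul, smul_eq_mul, Finset.sum_mul]
    have h2 := hsym2 v (w ∘ₗ p a.2)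
    simp only [LinearMap.comp_apply] at h2
    calc ∑ b ∈ S, u a.1 * (v b.1 * w (p a.2 b.2))
        = u a.1 * ∑ b ∈ S, v b.1 * w (p a.2 b.2) := by rw [Finset.mul_sum]
      _ = u a.1 * ∑ b ∈ S, v b.2 * w (p a.2 b.1) := by rw [h2]
      _ = ∑ b ∈ S, v b.2 * w (p a.2 b.1) * u a.1 := by
          rw [Finset.mul_sum]
          exact Finset.sum_congr rfl fun b _ => by ring
  have e23 : ∀ u v w : Module.Dual F A,
      pair3 u v w (t23 s (r ⊗ₜ r)) = u (rmap (Ls (rmap w) v)) := by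
    intro u v w
    have hL : pair3 u v w (t23 s (r ⊗ₜ r))
        = ∑ a ∈ S, ∑ b ∈ S, u b.1 * (v (s a.1 b.2) * w a.2) := by
      conv_lhs => rw [hS]
      rw [TensorProduct.sum_tmul]
      simp only [TensorProduct.tmul_sum, map_sum, t23_tmul, pair3_tmul]
    rw [hL, hr (Ls (rmap w) v), Finset.sum_comm]
    simp only [map_sum, map_smul, smul_eq_mul]
    refine Finset.sum_congr rfl fun b _ => ?_
    rw [hLs, hr w]
    simp only [map_sum, map_smul, LinearMap.sum_apply, LinearMap.smul_apply,
      smul_eq_mul, Finset.sum_mul]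
    exact Finset.sum_congr rfl fun a _ => by ring
  constructor
  · intro h a b
    refine dsep _ _ fun u => ?_
    have h1 := congrArg (pair3 u a b) h
    rw [map_add, e12 (s + p) u a b, e13 u a b, e23 u a b] at h1
    rw [h1, map_add, map_add]
  · intro h
    rw [← sub_eq_zero]
    refine triple_sep _ fun u v w => ?_
    rw [map_sub, map_add, e12 (s + p) u v w, e13 u v w, e23 u v w, h v w,
      map_add, map_add]
    ring
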